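/- The following Ramanujan-like series for 1/π² holds: ∑_{n=0}^{∞} ((1/2)_n)^5/((1)_n)^5 · (−1)^n/4^n · (20n² + 8n + 1) = 8/π², where the series on the left converges absolutely. -/

import Mathlib

/-- The Pochhammer symbol (ascending factorial) `(a)_n = ∏_{k=0}^{n-1} (a + k)`. -/
def poch (a : ℝ) (n : ℕ) : ℝ := ∏ k ∈ Finset.range n, (a + k)

namespace GuilleraAux

/-! ### Basic facts about `poch` -/

lemma poch_zero (a : ℝ) : poch a 0 = 1 := by simp [poch]

lemma poch_succ (a : ℝ) (n : ℕ) : poch a (n + 1) = poch a n * (a + n) :=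
  Finset.prod_range_succ _ _

lemma poch_pos {a : ℝ} (ha : 0 < a) (n : ℕ) : 0 < poch a n :=
  Finset.prod_pos fun k _ => by positivity

lemma poch_half_pos (n : ℕ) : 0 < poch (1/2) n := poch_pos (by norm_num) n

lemma poch_one_pos (n : ℕ) : 0 < poch 1 n := poch_pos one_pos n

lemma poch_le_poch {a b : ℝ} (ha : 0 < a) (h : a ≤ b) (n : ℕ) :
    poch a n ≤ poch b n := by
  apply Finset.prod_le_prod (fun k _ => by positivity) (fun k _ => by linarith)

lemma poch_add (a : ℝ) (n k : ℕ) :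
    poch a (n + k) = poch a n * poch (a + n) k := by
  rw [poch, poch, poch, Finset.prod_range_add]
  congr 1
  refine Finset.prod_congr rfl fun i _ => ?_
  push_cast; ring

lemma one_le_poch {a : ℝ} (ha : 1 ≤ a) (n : ℕ) : 1 ≤ poch a n := by
  have h := Finset.prod_le_prod (s := Finset.range n) (f := fun _ => (1:ℝ))
    (g := fun k : ℕ => a + (k:ℝ)) (fun k _ => by norm_num)
    (fun k _ => by have hk : (0:ℝ) ≤ (k:ℝ) := Nat.cast_nonneg k; linarith)
  simpa [poch] using h

lemma poch_one_le_poch_one_add (n k : ℕ) : poch 1 n ≤ poch 1 (n + k) := by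
  rw [poch_add]
  nlinarith [poch_one_pos n, one_le_poch (a := 1 + (n:ℝ))
    (by have : (0:ℝ) ≤ n := Nat.cast_nonneg n; linarith) k]

/-! ### The WZ pair -/

/-- The WZ kernel. -/
noncomputable def T (n k : ℕ) : ℝ :=
  (-1) ^ n / 4 ^ n * poch (1/2) n ^ 5 * poch (1/2) k ^ 4 /
    (poch 1 (n + k) ^ 4 * poch 1 n)

noncomputable def Gg (n k : ℕ) : ℝ :=
  T n k * (20 * (n:ℝ) ^ 2 + 8 * n + 1 + 4 * k + 8 * (k:ℝ) ^ 2 + 24 * n * k)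

noncomputable def Fg (n k : ℕ) : ℝ :=
  T n k * ((n:ℝ) * (16 * n + 32 * k + 8))

/-- The Wilf–Zeilberger relation for the pair `(Fg, Gg)`. -/
lemma wz (n k : ℕ) : Fg (n+1) k - Fg n k = Gg n (k+1) - Gg n k := by
  have hB := poch_half_pos k
  have hC := poch_one_pos (n + k)
  have hD := poch_one_pos n
  have h4 : (0:ℝ) < 4 ^ n := by positivity
  have hn1 : (0:ℝ) < 1 + (n:ℝ) := by positivity
  have hnk1 : (0:ℝ) < 1 + ((n:ℝ) + (k:ℝ)) := by positivity
  unfold Fg Gg T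
  have e3 : (n+1) + k = (n+k) + 1 := by omega
  have e4 : n + (k+1) = (n+k) + 1 := by omega
  rw [e3, e4, poch_succ, poch_succ, poch_succ, poch_succ, pow_succ, pow_succ]
  push_cast
  field_simp
  ring

lemma Fg_zero (k : ℕ) : Fg 0 k = 0 := by simp [Fg]

/-- Rectangle telescoping identity. -/
lemma rect (N K : ℕ) :
    ∑ n ∈ Finset.range N, Gg n 0
      = ∑ n ∈ Finset.range N, Gg n K - ∑ k ∈ Finset.range K, Fg N k := by
  induction K with
  | zero => simp
  | succ K ih =>
    have h1 : ∑ n ∈ Finset.range N, Gg n (K+1) - ∑ n ∈ Finset.range N, Gg n K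
        = Fg N K := by
      rw [← Finset.sum_sub_distrib]
      have : ∀ n ∈ Finset.range N, Gg n (K+1) - Gg n K = Fg (n+1) K - Fg n K :=
        fun n _ => (wz n K).symm
      rw [Finset.sum_congr rfl this, Finset.sum_range_sub (fun n => Fg n K), Fg_zero]
      ring
    rw [Finset.sum_range_succ]
    linarith [ih]

/-! ### Bounds -/

lemma T_abs_eq (n k : ℕ) : |T n k| = (1/4)^n * poch (1/2) n ^ 5 * poch (1/2) k ^ 4 /
    (poch 1 (n + k) ^ 4 * poch 1 n) := by
  have hA := poch_half_pos n
  have hB := poch_half_pos k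
  have hC := poch_one_pos (n + k)
  have hD := poch_one_pos n
  have hT : T n k = (-1)^n * ((1/4) ^ n * poch (1/2) n ^ 5 * poch (1/2) k ^ 4 /
      (poch 1 (n + k) ^ 4 * poch 1 n)) := by
    unfold T
    rw [div_pow, one_pow]
    field_simp
  rw [hT, abs_mul, abs_pow, abs_neg, abs_one, one_pow, one_mul,
    abs_of_pos (by positivity)]

lemma T_abs_le (n k : ℕ) : |T n k| ≤ (1/4) ^ n * poch (1/2) k ^ 4 := by
  have hA := poch_half_pos n
  have hB := poch_half_pos k
  have hC := poch_one_pos (n + k)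
  have hD := poch_one_pos n
  have hAD : poch (1/2) n ≤ poch 1 n := poch_le_poch (by norm_num) (by norm_num) n
  have hDC : poch 1 n ≤ poch 1 (n + k) := poch_one_le_poch_one_add n k
  rw [T_abs_eq, div_le_iff₀ (by positivity)]
  have h1 : poch (1/2) n ≤ poch 1 (n+k) := hAD.trans hDC
  have h2 : poch (1/2) n ^ 4 ≤ poch 1 (n+k) ^ 4 := pow_le_pow_left₀ hA.le h1 4
  have h5 : poch (1/2) n ^ 5 ≤ poch 1 (n+k) ^ 4 * poch 1 n := by
    have h6 := mul_le_mul h2 hAD hA.le (by positivity)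
    calc poch (1/2) n ^ 5 = poch (1/2) n ^ 4 * poch (1/2) n := by ring
      _ ≤ _ := h6
  calc (1/4:ℝ)^n * poch (1/2) n ^ 5 * poch (1/2) k ^ 4
      = ((1/4:ℝ)^n * poch (1/2) k ^ 4) * poch (1/2) n ^ 5 := by ring
    _ ≤ ((1/4:ℝ)^n * poch (1/2) k ^ 4) * (poch 1 (n+k) ^ 4 * poch 1 n) :=
        mul_le_mul_of_nonneg_left h5 (by positivity)
    _ = (1/4:ℝ)^n * poch (1/2) k ^ 4 * (poch 1 (n+k) ^ 4 * poch 1 n) := by ring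

lemma summable_sq_geo (c : ℝ) :
    Summable (fun n : ℕ => c * ((n:ℝ) + 1) ^ 2 * (1/4) ^ n) := by
  have h0 : ‖(1/4 : ℝ)‖ < 1 := by
    rw [Real.norm_eq_abs]; rw [abs_of_nonneg]; norm_num; norm_num
  have h2 := summable_pow_mul_geometric_of_norm_lt_one (R := ℝ) 2 h0
  have h1 := summable_pow_mul_geometric_of_norm_lt_one (R := ℝ) 1 h0
  have hg := summable_geometric_of_norm_lt_one (x := (1/4:ℝ)) h0
  have hsum : Summable (fun n : ℕ => ((n:ℝ)^2 + 2*(n:ℝ)^1 + 1) * (1/4)^n) := by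
    have := (h2.add ((h1.mul_left 2))).add hg
    convert this using 2 with n
    · rfl
    ring
  have := hsum.mul_left c
  convert this using 2 with n
  · rfl
  ring

lemma pg_nonneg (n k : ℕ) :
    (0:ℝ) ≤ 20 * (n:ℝ) ^ 2 + 8 * n + 1 + 4 * k + 8 * (k:ℝ) ^ 2 + 24 * n * k := by
  positivity

lemma pg_le (n k : ℕ) :
    20 * (n:ℝ) ^ 2 + 8 * n + 1 + 4 * k + 8 * (k:ℝ) ^ 2 + 24 * n * k
      ≤ 33 * ((k:ℝ)+1)^2 * ((n:ℝ)+1)^2 := by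
  have hn : (0:ℝ) ≤ n := Nat.cast_nonneg n
  have hk : (0:ℝ) ≤ k := Nat.cast_nonneg k
  nlinarith [sq_nonneg ((n:ℝ) - k), sq_nonneg ((n:ℝ)*k), mul_nonneg hn hk,
    mul_nonneg (mul_nonneg hn hn) hk, mul_nonneg (mul_nonneg hn hk) hk]

lemma pf_abs_le (n k : ℕ) :
    |(n:ℝ) * (16 * n + 32 * k + 8)| ≤ 33 * ((k:ℝ)+1)^2 * ((n:ℝ)+1)^2 := by
  have hn : (0:ℝ) ≤ n := Nat.cast_nonneg n
  have hk : (0:ℝ) ≤ k := Nat.cast_nonneg k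
  rw [abs_of_nonneg (by positivity)]
  nlinarith [mul_nonneg hn hk, mul_nonneg (mul_nonneg hn hn) hk,
    mul_nonneg (mul_nonneg hn hk) hk, sq_nonneg ((n:ℝ)*k)]

lemma abs_Gg_le (n k : ℕ) :
    |Gg n k| ≤ (poch (1/2) k ^ 4 * (33 * ((k:ℝ)+1)^2)) * (((n:ℝ)+1)^2 * (1/4)^n) := by
  have hB := poch_half_pos k
  rw [Gg, abs_mul, abs_of_nonneg (pg_nonneg n k)]
  have h1 := T_abs_le n k
  have h2 := pg_le n k
  calc |T n k| * (20 * (n:ℝ) ^ 2 + 8 * n + 1 + 4 * k + 8 * (k:ℝ) ^ 2 + 24 * n * k)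
      ≤ ((1/4)^n * poch (1/2) k ^ 4) * (33 * ((k:ℝ)+1)^2 * ((n:ℝ)+1)^2) := by
        apply mul_le_mul h1 h2 (pg_nonneg n k) (by positivity)
    _ = (poch (1/2) k ^ 4 * (33 * ((k:ℝ)+1)^2)) * (((n:ℝ)+1)^2 * (1/4)^n) := by ring

lemma abs_Fg_le (n k : ℕ) :
    |Fg n k| ≤ (poch (1/2) k ^ 4 * (33 * ((k:ℝ)+1)^2)) * (((n:ℝ)+1)^2 * (1/4)^n) := by
  have hB := poch_half_pos k
  rw [Fg, abs_mul]
  have h1 := T_abs_le n k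
  have h2 := pf_abs_le n k
  calc |T n k| * |(n:ℝ) * (16 * n + 32 * k + 8)|
      ≤ ((1/4)^n * poch (1/2) k ^ 4) * (33 * ((k:ℝ)+1)^2 * ((n:ℝ)+1)^2) := by
        apply mul_le_mul h1 h2 (abs_nonneg _) (by positivity)
    _ = (poch (1/2) k ^ 4 * (33 * ((k:ℝ)+1)^2)) * (((n:ℝ)+1)^2 * (1/4)^n) := by ring

lemma summable_Gg (k : ℕ) : Summable (fun n => Gg n k) := by
  apply Summable.of_norm_bounded (summable_sq_geo (poch (1/2) k ^ 4 * (33 * ((k:ℝ)+1)^2)))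
  intro n
  rw [Real.norm_eq_abs]
  calc |Gg n k| ≤ (poch (1/2) k ^ 4 * (33 * ((k:ℝ)+1)^2)) * (((n:ℝ)+1)^2 * (1/4)^n) :=
        abs_Gg_le n k
    _ = poch (1/2) k ^ 4 * (33 * ((k:ℝ)+1)^2) * ((n:ℝ)+1)^2 * (1/4)^n := by ring

lemma summable_Fg (k : ℕ) : Summable (fun n => Fg n k) := by
  apply Summable.of_norm_bounded (summable_sq_geo (poch (1/2) k ^ 4 * (33 * ((k:ℝ)+1)^2)))
  intro n
  rw [Real.norm_eq_abs]
  calc |Fg n k| ≤ (poch (1/2) k ^ 4 * (33 * ((k:ℝ)+1)^2)) * (((n:ℝ)+1)^2 * (1/4)^n) :=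
        abs_Fg_le n k
    _ = poch (1/2) k ^ 4 * (33 * ((k:ℝ)+1)^2) * ((n:ℝ)+1)^2 * (1/4)^n := by ring

/-- The sum is independent of the column `K`. -/
lemma tsum_col (K : ℕ) : ∑' n, Gg n 0 = ∑' n, Gg n K := by
  have h0 := (summable_Gg 0).hasSum.tendsto_sum_nat
  have hK := (summable_Gg K).hasSum.tendsto_sum_nat
  have hF : Filter.Tendsto (fun N => ∑ k ∈ Finset.range K, Fg N k)
      Filter.atTop (nhds 0) := by
    have : ∀ k : ℕ, Filter.Tendsto (fun N => Fg N k) Filter.atTop (nhds 0) :=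
      fun k => (summable_Fg k).tendsto_atTop_zero
    have := tendsto_finset_sum (Finset.range K) (fun k _ => this k)
    simpa using this
  have heq : (fun N => ∑ n ∈ Finset.range N, Gg n 0)
      = fun N => ∑ n ∈ Finset.range N, Gg n K - ∑ k ∈ Finset.range K, Fg N k := by
    funext N; exact rect N K
  rw [heq] at h0
  have := hK.sub hF
  simp only [sub_zero] at this
  exact tendsto_nhds_unique h0 this

/-! ### Wallis product asymptotics -/

open Real.Wallis Filter

lemma one_le_W (K : ℕ) : 1 ≤ W K := by
  induction K with
  | zero => simp [W]
  | succ K ih =>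
    rw [W_succ]
    have hK : (0:ℝ) ≤ K := Nat.cast_nonneg K
    have h1 : (1:ℝ) ≤ (2 * K + 2) / (2 * K + 1) * ((2 * K + 2) / (2 * K + 3)) := by
      rw [div_mul_div_comm, le_div_iff₀ (by positivity)]
      nlinarith
    nlinarith [W_pos K]

lemma wallis_ratio (K : ℕ) :
    poch (1/2) K ^ 2 * (2 * (K:ℝ) + 1) * W K = poch 1 K ^ 2 := by
  induction K with
  | zero => simp [poch_zero, W]
  | succ K ih =>
    have hK : (0:ℝ) ≤ K := Nat.cast_nonneg K
    rw [poch_succ, poch_succ, W_succ]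
    push_cast
    field_simp
    linear_combination ((2*(K:ℝ)+1) * ((K:ℝ)+1)^2 * (2*K+3)) * ih

lemma Gg_zero_eq (k : ℕ) :
    Gg 0 k = (poch (1/2) k / poch 1 k) ^ 4 * (8 * (k:ℝ)^2 + 4 * k + 1) := by
  have hD := poch_one_pos k
  simp only [Gg, T, poch_zero]
  norm_num
  rw [div_pow]
  ring

lemma Gg_zero_eq2 (k : ℕ) :
    Gg 0 k = (8 * (k:ℝ)^2 + 4 * k + 1) / ((2 * (k:ℝ) + 1) ^ 2 * W k ^ 2) := by
  have hD := poch_one_pos k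
  have hW := W_pos k
  have h := wallis_ratio k
  have h4 : poch (1/2) k ^ 4 * ((2 * (k:ℝ) + 1) ^ 2 * W k ^ 2) = poch 1 k ^ 4 := by
    linear_combination (poch (1/2) k ^ 2 * (2 * (k:ℝ) + 1) * W k + poch 1 k ^ 2) * h
  rw [Gg_zero_eq, eq_div_iff (by positivity), div_pow]
  field_simp
  linear_combination h4

lemma abs_Gg_zero_le (k : ℕ) : |Gg 0 k| ≤ 2 := by
  have hW1 := one_le_W k
  have hW := W_pos k
  have hk : (0:ℝ) ≤ k := Nat.cast_nonneg k
  rw [Gg_zero_eq2, abs_of_nonneg (by positivity)]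
  rw [div_le_iff₀ (by positivity)]
  nlinarith [sq_nonneg (W k - 1), sq_nonneg ((k:ℝ) * (W k - 1))]

lemma tendsto_inv_nat_add :
    Tendsto (fun k : ℕ => 2 * (1 / ((k:ℝ) + 1))) atTop (nhds 0) := by
  have := tendsto_one_div_add_atTop_nhds_zero_nat.const_mul (2:ℝ)
  simpa using this

lemma tendsto_ratio_two :
    Tendsto (fun k : ℕ => (8 * (k:ℝ)^2 + 4 * k + 1) / (2 * (k:ℝ) + 1) ^ 2)
      atTop (nhds 2) := by
  have heq : (fun k : ℕ => (8 * (k:ℝ)^2 + 4 * k + 1) / (2 * (k:ℝ) + 1) ^ 2)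
      = fun k : ℕ => 2 - (4 * (k:ℝ) + 1) / (2 * (k:ℝ) + 1) ^ 2 := by
    funext k
    have hk : (0:ℝ) < 2 * (k:ℝ) + 1 := by positivity
    field_simp
    ring
  rw [heq]
  have h0 : Tendsto (fun k : ℕ => (4 * (k:ℝ) + 1) / (2 * (k:ℝ) + 1) ^ 2) atTop (nhds 0) := by
    apply squeeze_zero (fun k => by positivity) (g := fun k : ℕ => 2 * (1 / ((k:ℝ) + 1)))
      (fun k => ?_) tendsto_inv_nat_add
    have hk : (0:ℝ) ≤ k := Nat.cast_nonneg k
    show (4*(k:ℝ)+1)/(2*(k:ℝ)+1)^2 ≤ 2*(1/((k:ℝ)+1))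
    rw [mul_one_div, div_le_div_iff₀ (by positivity) (by positivity)]
    nlinarith
  have := (tendsto_const_nhds (x := (2:ℝ)) (f := atTop (α := ℕ))).sub h0
  simpa using this

lemma tendsto_Gg_zero :
    Tendsto (fun k : ℕ => Gg 0 k) atTop (nhds (8 / Real.pi ^ 2)) := by
  have hW : Tendsto W atTop (nhds (Real.pi / 2)) := tendsto_W_nhds_pi_div_two
  have hπ : (Real.pi / 2) ^ 2 ≠ 0 := by positivity
  have h1 : Tendsto (fun k : ℕ => (8 * (k:ℝ)^2 + 4 * k + 1) / (2 * (k:ℝ) + 1) ^ 2 / W k ^ 2)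
      atTop (nhds (2 / (Real.pi / 2) ^ 2)) :=
    tendsto_ratio_two.div (hW.pow 2) hπ
  have heq : (fun k : ℕ => Gg 0 k)
      = fun k : ℕ => (8 * (k:ℝ)^2 + 4 * k + 1) / (2 * (k:ℝ) + 1) ^ 2 / W k ^ 2 := by
    funext k
    rw [Gg_zero_eq2, div_div]
  rw [heq]
  have : 2 / (Real.pi / 2) ^ 2 = 8 / Real.pi ^ 2 := by
    field_simp
    ring
  rw [← this]
  exact h1

/-! ### Decay of the columns in `k` -/

lemma poch_one_add_ge (k m : ℕ) :
    ((k:ℝ) + 1) * poch 1 (m + 1) ≤ poch (1 + (k:ℝ)) (m + 1) := by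
  rw [poch, poch, Finset.prod_range_succ', Finset.prod_range_succ']
  have h1 : ∏ i ∈ Finset.range m, (1 + ((i:ℝ) + 1))
      ≤ ∏ i ∈ Finset.range m, (1 + (k:ℝ) + ((i:ℝ) + 1)) := by
    apply Finset.prod_le_prod (fun i _ => by positivity)
    intro i _
    have : (0:ℝ) ≤ k := Nat.cast_nonneg k
    linarith
  have hcast : ∀ i : ℕ, (1:ℝ) + ((i:ℕ) + 1 : ℕ) = 1 + ((i:ℝ) + 1) := by
    intro i; push_cast; ring
  have hcast2 : ∀ i : ℕ, (1:ℝ) + (k:ℝ) + ((i:ℕ) + 1 : ℕ) = 1 + (k:ℝ) + ((i:ℝ) + 1) := by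
    intro i; push_cast; ring
  simp only [hcast, hcast2, Nat.cast_zero, add_zero]
  have hp : (0:ℝ) ≤ ∏ i ∈ Finset.range m, (1 + ((i:ℝ) + 1)) := by
    apply Finset.prod_nonneg; intro i _; positivity
  have hk : (0:ℝ) ≤ k := Nat.cast_nonneg k
  nlinarith [h1, hp]

lemma T_abs_le' (n k : ℕ) :
    |T (n+1) k| ≤ (1/4)^(n+1) * (1/((k:ℝ)+1))^4 := by
  have hA := poch_half_pos (n+1)
  have hB := poch_half_pos k
  have hD := poch_one_pos (n+1)
  have hQ := poch_one_pos k
  have hk : (0:ℝ) ≤ k := Nat.cast_nonneg k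
  have hC : poch 1 ((n+1) + k) = poch 1 k * poch (1 + (k:ℝ)) (n+1) := by
    rw [show (n+1) + k = k + (n+1) from Nat.add_comm _ _, poch_add]
  have hP : (0:ℝ) < poch (1 + (k:ℝ)) (n+1) := by
    have := poch_one_add_ge k n
    nlinarith [poch_one_pos (n+1)]
  have hAD : poch (1/2) (n+1) ≤ poch 1 (n+1) := poch_le_poch (by norm_num) (by norm_num) _
  have hBQ : poch (1/2) k ≤ poch 1 k := poch_le_poch (by norm_num) (by norm_num) _
  have key : poch (1/2) (n+1) ^ 5 * poch (1/2) k ^ 4 * ((k:ℝ)+1)^4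
      ≤ poch 1 ((n+1) + k) ^ 4 * poch 1 (n+1) := by
    calc poch (1/2) (n+1) ^ 5 * poch (1/2) k ^ 4 * ((k:ℝ)+1)^4
        ≤ poch 1 (n+1) ^ 5 * poch 1 k ^ 4 * ((k:ℝ)+1)^4 := by
          have h1 : poch (1/2) (n+1) ^ 5 ≤ poch 1 (n+1) ^ 5 :=
            pow_le_pow_left₀ hA.le hAD 5
          have h2 : poch (1/2) k ^ 4 ≤ poch 1 k ^ 4 :=
            pow_le_pow_left₀ hB.le hBQ 4
          have h3 : (0:ℝ) ≤ ((k:ℝ)+1)^4 := by positivity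
          nlinarith [pow_pos hA 5, pow_pos hB 4, pow_pos hD 5, pow_pos hQ 4,
            mul_le_mul h1 h2 (pow_pos hB 4).le (pow_pos hD 5).le]
      _ = poch 1 k ^ 4 * (((k:ℝ)+1) * poch 1 (n+1)) ^ 4 * poch 1 (n+1) := by ring
      _ ≤ poch 1 k ^ 4 * poch (1 + (k:ℝ)) (n+1) ^ 4 * poch 1 (n+1) := by
          have h4 : (((k:ℝ)+1) * poch 1 (n+1)) ^ 4 ≤ poch (1 + (k:ℝ)) (n+1) ^ 4 := by
            apply pow_le_pow_left₀ (by positivity)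
            have := poch_one_add_ge k n
            linarith
          nlinarith [pow_pos hQ 4, hD, mul_le_mul_of_nonneg_left h4 (pow_pos hQ 4).le]
      _ = (poch 1 k * poch (1 + (k:ℝ)) (n+1)) ^ 4 * poch 1 (n+1) := by ring
      _ = poch 1 ((n+1) + k) ^ 4 * poch 1 (n+1) := by rw [hC]
  rw [T_abs_eq]
  have hCpos := poch_one_pos ((n+1) + k)
  rw [div_le_iff₀ (by positivity)]
  calc (1/4:ℝ)^(n+1) * poch (1/2) (n+1) ^ 5 * poch (1/2) k ^ 4
      = (1/4:ℝ)^(n+1) * (poch (1/2) (n+1) ^ 5 * poch (1/2) k ^ 4 * ((k:ℝ)+1)^4) / ((k:ℝ)+1)^4 := by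
        field_simp
    _ ≤ (1/4:ℝ)^(n+1) * (poch 1 ((n+1) + k) ^ 4 * poch 1 (n+1)) / ((k:ℝ)+1)^4 := by
        gcongr
    _ = (1/4)^(n+1) * (1/((k:ℝ)+1))^4 * (poch 1 ((n+1) + k) ^ 4 * poch 1 (n+1)) := by
        field_simp

lemma abs_Gg_succ_le (n k : ℕ) :
    |Gg (n+1) k| ≤ 33 * (((n:ℝ)+1)+1)^2 * (1/4)^(n+1) * (1/((k:ℝ)+1))^2 := by
  rw [Gg, abs_mul, abs_of_nonneg (pg_nonneg (n+1) k)]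
  have h1 := T_abs_le' n k
  have hk : (0:ℝ) ≤ k := Nat.cast_nonneg k
  have hn : (0:ℝ) ≤ n := Nat.cast_nonneg n
  have h2' : 20 * ((n+1:ℕ):ℝ) ^ 2 + 8 * ((n+1:ℕ):ℝ) + 1 + 4 * k + 8 * (k:ℝ) ^ 2
        + 24 * ((n+1:ℕ):ℝ) * k
      ≤ 33 * ((k:ℝ)+1)^2 * ((((n+1:ℕ)):ℝ)+1)^2 := pg_le (n+1) k
  calc |T (n+1) k| * (20 * ((n+1:ℕ):ℝ) ^ 2 + 8 * ((n+1:ℕ):ℝ) + 1 + 4 * (k:ℝ)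
        + 8 * (k:ℝ) ^ 2 + 24 * ((n+1:ℕ):ℝ) * k)
      ≤ ((1/4)^(n+1) * (1/((k:ℝ)+1))^4) * (33 * ((k:ℝ)+1)^2 * ((((n+1:ℕ)):ℝ)+1)^2) := by
        apply mul_le_mul h1 h2' (pg_nonneg (n+1) k) (by positivity)
    _ = 33 * (((n:ℝ)+1)+1)^2 * (1/4)^(n+1) * (1/((k:ℝ)+1))^2 := by
        push_cast
        field_simp

lemma tendsto_Gg_succ (n : ℕ) :
    Tendsto (fun k : ℕ => Gg (n+1) k) atTop (nhds 0) := by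
  have hg : Tendsto (fun k : ℕ => (33 * (((n:ℝ)+1)+1)^2 * (1/4)^(n+1)) * (1 / ((k:ℝ)+1))^2)
      atTop (nhds 0) := by
    have h1 : Tendsto (fun k : ℕ => (1 / ((k:ℝ)+1))^2) atTop (nhds 0) := by
      have := (tendsto_one_div_add_atTop_nhds_zero_nat (𝕜 := ℝ)).pow 2
      simpa using this
    have := h1.const_mul (33 * (((n:ℝ)+1)+1)^2 * (1/4:ℝ)^(n+1))
    simpa using this
  apply squeeze_zero_norm (fun k => ?_) hg
  rw [Real.norm_eq_abs]
  calc |Gg (n+1) k| ≤ 33 * (((n:ℝ)+1)+1)^2 * (1/4)^(n+1) * (1/((k:ℝ)+1))^2 :=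
        abs_Gg_succ_le n k
    _ = (33 * (((n:ℝ)+1)+1)^2 * (1/4)^(n+1)) * (1 / ((k:ℝ)+1))^2 := by ring

lemma Gg_bound_unif (K n : ℕ) : ‖Gg n K‖ ≤ 33 * ((n:ℝ) + 1) ^ 2 * (1/4) ^ n := by
  rw [Real.norm_eq_abs]
  match n with
  | 0 =>
    have h := abs_Gg_zero_le K
    norm_num
    linarith
  | (n+1) =>
    have hK : (0:ℝ) ≤ K := Nat.cast_nonneg K
    have h2 : (1/((K:ℝ)+1))^2 ≤ 1 := by
      rw [div_pow, one_pow, div_le_one (by positivity)]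
      nlinarith
    calc |Gg (n+1) K| ≤ 33 * (((n:ℝ)+1)+1)^2 * (1/4)^(n+1) * (1/((K:ℝ)+1))^2 :=
          abs_Gg_succ_le n K
      _ ≤ 33 * (((n:ℝ)+1)+1)^2 * (1/4)^(n+1) * 1 := by
          apply mul_le_mul_of_nonneg_left h2 (by positivity)
      _ = 33 * (((n+1:ℕ):ℝ) + 1) ^ 2 * (1/4) ^ (n+1) := by push_cast; ring

/-! ### Tannery's theorem and conclusion -/

lemma tendsto_col_tsum :
    Tendsto (fun K : ℕ => ∑' n, Gg n K) atTop (nhds (8 / Real.pi ^ 2)) := by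
  have key := tendsto_tsum_of_dominated_convergence
    (f := fun (K : ℕ) (n : ℕ) => Gg n K)
    (g := fun n => if n = 0 then 8 / Real.pi ^ 2 else 0)
    (bound := fun n => 33 * ((n:ℝ) + 1) ^ 2 * (1/4) ^ n)
    (summable_sq_geo 33)
    (fun n => by
      match n with
      | 0 => simpa using tendsto_Gg_zero
      | (n+1) => simpa using tendsto_Gg_succ n)
    (Filter.Eventually.of_forall (fun K n => Gg_bound_unif K n))
  have : ∑' n : ℕ, (if n = 0 then 8 / Real.pi ^ 2 else 0) = 8 / Real.pi ^ 2 := by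
    rw [tsum_eq_single 0]
    · simp
    · intro b hb; simp [hb]
  rwa [this] at key

lemma final_tsum : ∑' n, Gg n 0 = 8 / Real.pi ^ 2 := by
  have hconst : (fun K : ℕ => ∑' n, Gg n K) = fun _ => ∑' n, Gg n 0 := by
    funext K; exact (tsum_col K).symm
  have h := tendsto_col_tsum
  rw [hconst] at h
  exact tendsto_nhds_unique tendsto_const_nhds h

lemma Gg_n0 (n : ℕ) :
    Gg n 0 = poch (1/2) n ^ 5 / poch 1 n ^ 5 * ((-1) ^ n / 4 ^ n) *
      (20 * (n:ℝ) ^ 2 + 8 * n + 1) := by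
  simp only [Gg, T, Nat.add_zero, poch_zero, Nat.cast_zero]
  ring

end GuilleraAux

/-- Guillera's series: `∑ ((1/2)_n)^5/((1)_n)^5 · (−1)^n/4^n · (20n²+8n+1) = 8/π²`. -/
theorem guillera_series_f3 :
    (Summable fun n : ℕ =>
      (poch (1/2) n) ^ 5 / (poch 1 n) ^ 5 * ((-1) ^ n / 4 ^ n) *
        (20 * (n : ℝ) ^ 2 + 8 * n + 1)) ∧
    ∑' n : ℕ, (poch (1/2) n) ^ 5 / (poch 1 n) ^ 5 * ((-1) ^ n / 4 ^ n) *
        (20 * (n : ℝ) ^ 2 + 8 * n + 1) = 8 / Real.pi ^ 2 := by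
  have hfun : (fun n : ℕ =>
      (poch (1/2) n) ^ 5 / (poch 1 n) ^ 5 * ((-1) ^ n / 4 ^ n) *
        (20 * (n : ℝ) ^ 2 + 8 * n + 1)) = fun n => GuilleraAux.Gg n 0 := by
    funext n; rw [GuilleraAux.Gg_n0]
  constructor
  · rw [hfun]; exact GuilleraAux.summable_Gg 0
  · rw [show (fun n : ℕ => (poch (1/2) n) ^ 5 / (poch 1 n) ^ 5 * ((-1) ^ n / 4 ^ n) *
        (20 * (n : ℝ) ^ 2 + 8 * n + 1)) = fun n => GuilleraAux.Gg n 0 from hfun]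
    exact GuilleraAux.final_tsum
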